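/- Let G = ⟨a,b | a^m = b^n⟩ with m, n nonzero integers. If m = 2λr and n = 2λs with r, s odd and coprime, then there is a surjective group homomorphism from G onto the Klein bottle group K = ⟨u,v | u² = v²⟩, given by sending a to u^s and b to v^r. -/

import Mathlib

/-- The single defining relation `t a^m t⁻¹ a^{-n}` of the Baumslag-Solitar group
`BS(m,n)`, as a subset of the free group on `Bool` (with `false ↦ a`, `true ↦ t`). -/
abbrev bsRels (m n : ℤ) : Set (FreeGroup Bool) :=
  {FreeGroup.of true * (FreeGroup.of false) ^ m * (FreeGroup.of true)⁻¹ *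
    ((FreeGroup.of false) ^ n)⁻¹}

/-- The Baumslag-Solitar group `BS(m,n) = ⟨a, t ∣ t a^m t⁻¹ = a^n⟩`. -/
abbrev BS (m n : ℤ) := PresentedGroup (bsRels m n)

/-- The generator `a` of `BS(m,n)`. -/
def BS.a (m n : ℤ) : BS m n := PresentedGroup.of false

/-- The generator `t` of `BS(m,n)`. -/
def BS.t (m n : ℤ) : BS m n := PresentedGroup.of true

/-- The Klein bottle group `K = ⟨u, v ∣ u² = v²⟩` (`true ↦ u`, `false ↦ v`). -/
abbrev KB := PresentedGroup
  ({FreeGroup.of true ^ 2 * (FreeGroup.of false ^ 2)⁻¹} : Set (FreeGroup Bool))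

/-- The generator `u` of the Klein bottle group. -/
def KB.u : KB := PresentedGroup.of true

/-- The generator `v` of the Klein bottle group. -/
def KB.v : KB := PresentedGroup.of false
/-- The amalgam `⟨a, b ∣ a^m = b^n⟩` (`true ↦ a`, `false ↦ b`). -/
abbrev Amalgam (m n : ℤ) := PresentedGroup
  ({(FreeGroup.of true) ^ m * ((FreeGroup.of false) ^ n)⁻¹} : Set (FreeGroup Bool))

/-- The generator `a` of the amalgam `⟨a, b ∣ a^m = b^n⟩`. -/
def Amalgam.a (m n : ℤ) : Amalgam m n := PresentedGroup.of true

/-- The generator `b` of the amalgam `⟨a, b ∣ a^m = b^n⟩`. -/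
def Amalgam.b (m n : ℤ) : Amalgam m n := PresentedGroup.of false


lemma KBrel : (KB.u : KB) ^ (2:ℤ) = KB.v ^ (2:ℤ) := by
  have h : ((QuotientGroup.mk (FreeGroup.of true ^ 2 * (FreeGroup.of false ^ 2)⁻¹) : KB)) = 1 := by
    rw [QuotientGroup.eq_one_iff]
    exact Subgroup.subset_normalClosure (Set.mem_singleton _)
  have : (KB.u ^ (2:ℤ)) * (KB.v ^ (2:ℤ))⁻¹ = 1 := by
    simpa [KB.u, KB.v, PresentedGroup.of, zpow_ofNat] using
      (show PresentedGroup.mk _ (FreeGroup.of true ^ 2 * (FreeGroup.of false ^ 2)⁻¹) = (1 : KB) from h)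
  group at this ⊢
  exact mul_inv_eq_one.mp this

theorem stmt5 (m n lam r s : ℤ) (hm : m ≠ 0) (hn : n ≠ 0)
    (hmr : m = 2 * lam * r) (hns : n = 2 * lam * s)
    (hr : Odd r) (hs : Odd s) (hco : IsCoprime r s) :
    ∃ f : Amalgam m n →* KB,
      Function.Surjective f ∧ f (Amalgam.a m n) = KB.u ^ s ∧
        f (Amalgam.b m n) = KB.v ^ r := by
  set f0 : Bool → KB := fun x => if x then KB.u ^ s else KB.v ^ r with hf0
  have hrel : ∀ w ∈ ({(FreeGroup.of true) ^ m * ((FreeGroup.of false) ^ n)⁻¹} :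
      Set (FreeGroup Bool)), FreeGroup.lift f0 w = 1 := by
    rintro w rfl
    have h1 : (KB.u ^ s) ^ m = (KB.v ^ r) ^ n := by
      rw [← zpow_mul, ← zpow_mul, hmr, hns]
      have e1 : s * (2 * lam * r) = 2 * (lam * r * s) := by ring
      have e2 : r * (2 * lam * s) = 2 * (lam * r * s) := by ring
      rw [e1, e2, zpow_mul KB.u 2 (lam*r*s), zpow_mul KB.v 2 (lam*r*s), KBrel]
    simp only [map_mul, map_inv, map_zpow, FreeGroup.lift_apply_of, hf0, if_pos, if_neg,
      Bool.false_eq_true, not_false_iff, ite_true, ite_false]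
    rw [h1, mul_inv_cancel]
  refine ⟨PresentedGroup.toGroup hrel, ?_, ?_, ?_⟩
  · set f := PresentedGroup.toGroup hrel with hf
    have hu : KB.u ^ s ∈ f.range := ⟨Amalgam.a m n, by
      simp [Amalgam.a, hf, PresentedGroup.toGroup.of, hf0]⟩
    have hv : KB.v ^ r ∈ f.range := ⟨Amalgam.b m n, by
      simp [Amalgam.b, hf, PresentedGroup.toGroup.of, hf0]⟩
    have hz2s : (KB.u ^ (2:ℤ)) ^ s ∈ f.range := by
      have : (KB.u ^ s) ^ (2:ℤ) ∈ f.range := zpow_mem hu 2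
      rwa [← zpow_mul, mul_comm, zpow_mul] at this
    have hz2r : (KB.u ^ (2:ℤ)) ^ r ∈ f.range := by
      have : (KB.v ^ r) ^ (2:ℤ) ∈ f.range := zpow_mem hv 2
      rwa [← zpow_mul, mul_comm, zpow_mul, ← KBrel] at this
    have hz : KB.u ^ (2:ℤ) ∈ f.range := by
      obtain ⟨x, y, hxy⟩ := hco
      have : (KB.u ^ (2:ℤ)) ^ (x * r + y * s) ∈ f.range := by
        rw [zpow_add, mul_comm x r, mul_comm y s,
          zpow_mul (KB.u ^ (2:ℤ)) r x, zpow_mul (KB.u ^ (2:ℤ)) s y]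
        exact mul_mem (zpow_mem hz2r x) (zpow_mem hz2s y)
      rwa [hxy, zpow_one] at this
    obtain ⟨k, hk⟩ := hs
    obtain ⟨l, hl⟩ := hr
    have huu : KB.u ∈ f.range := by
      have : (KB.u ^ (2:ℤ)) ^ (-k) * KB.u ^ s ∈ f.range :=
        mul_mem (zpow_mem hz (-k)) hu
      rwa [← zpow_mul, ← zpow_add, hk, show 2 * -k + (2*k+1) = 1 by ring, zpow_one] at this
    have hvv : KB.v ∈ f.range := by
      have : (KB.u ^ (2:ℤ)) ^ (-l) * KB.v ^ r ∈ f.range :=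
        mul_mem (zpow_mem hz (-l)) hv
      rwa [KBrel, ← zpow_mul, ← zpow_add, hl, show 2 * -l + (2*l+1) = 1 by ring, zpow_one] at this
    rw [← MonoidHom.range_eq_top, eq_top_iff,
      ← PresentedGroup.closure_range_of, Subgroup.closure_le]
    rintro _ ⟨x, rfl⟩
    cases x
    · exact hvv
    · exact huu
  · simp [Amalgam.a, PresentedGroup.toGroup.of, hf0]
  · simp [Amalgam.b, PresentedGroup.toGroup.of, hf0]
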